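/- (q-integration by parts on ℝ_q) If the q-integral ∫_{-∞}^∞ (∂_q f)(x) g(x) d_q x converges absolutely and ∫_{-∞}^∞ f(x)(∂_q g)(x) d_q x converges absolutely, and the boundary terms vanish appropriately, then ∫_{-∞}^∞ (∂_q f)(x) g(x) d_q x = -∫_{-∞}^∞ f(x) (∂_q g)(x) d_q x. -/

import Mathlib

open Complex Filter

noncomputable section

/-- Infinite q-Pochhammer symbol `(a;q)_∞`, real version. -/
def qPochR (a q : ℝ) : ℝ := ∏' k : ℕ, (1 - a * q ^ k)

/-- Infinite q-Pochhammer symbol `(a;q)_∞`, complex version. -/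
def qPochC (a q : ℂ) : ℂ := ∏' k : ℕ, (1 - a * q ^ k)

/-- q-Gamma function, complex argument. -/
def qGammaC (q : ℝ) (x : ℂ) : ℂ :=
  qPochC (q : ℂ) (q : ℂ) * (1 - (q : ℂ)) ^ ((1 : ℂ) - x) / qPochC ((q : ℂ) ^ x) (q : ℂ)

/-- q-Gamma function, real argument. -/
def qGammaR (q x : ℝ) : ℝ := qPochR q q * (1 - q) ^ (1 - x) / qPochR (q ^ x) q

/-- q-number `[x]_q`, complex. -/
def qNumC (q : ℝ) (x : ℂ) : ℂ := (1 - (q : ℂ) ^ x) / (1 - (q : ℂ))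

/-- q-number `[x]_q`, real. -/
def qNumR (q x : ℝ) : ℝ := (1 - q ^ x) / (1 - q)

/-- q-factorial `[n]_q! = (q;q)_n / (1-q)^n`. -/
def qFact (q : ℝ) (n : ℕ) : ℝ := (∏ k ∈ Finset.range n, (1 - q ^ (k + 1))) / (1 - q) ^ n

/-- q-cosine. -/
def qCos (q : ℝ) (x : ℂ) : ℂ :=
  ∑' n : ℕ, (-1 : ℂ) ^ n * (q : ℂ) ^ (n * (n + 1)) * x ^ (2 * n) / (qFact q (2 * n) : ℂ)

/-- q-sine. -/
def qSin (q : ℝ) (x : ℂ) : ℂ :=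
  ∑' n : ℕ, (-1 : ℂ) ^ n * (q : ℂ) ^ (n * (n + 1)) * x ^ (2 * n + 1) / (qFact q (2 * n + 1) : ℂ)

/-- q-exponential `e(z;q²)`. -/
def qExp (q : ℝ) (z : ℂ) : ℂ := qCos q (-I * z) + I * qSin q (-I * z)

/-- The q²-analogue differential operator `∂_q`. -/
def Dq (q : ℝ) (f : ℝ → ℂ) (z : ℝ) : ℂ :=
  (f (q⁻¹ * z) + f (-(q⁻¹ * z)) - f (q * z) + f (-(q * z)) - 2 * f (-z)) /
    ((2 * (1 - q) * z : ℝ) : ℂ)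

/-- Iterated `∂_q`. -/
def DqIter (q : ℝ) (f : ℝ → ℂ) : ℕ → ℝ → ℂ
  | 0 => f
  | n + 1 => Dq q (DqIter q f n)

/-- Even part of a function. -/
def feP (f : ℝ → ℂ) (x : ℝ) : ℂ := (f x + f (-x)) / 2

/-- Odd part of a function. -/
def foP (f : ℝ → ℂ) (x : ℝ) : ℂ := (f x - f (-x)) / 2

/-- The set `R_q = {±q^n : n ∈ ℤ}`. -/
def Rq (q : ℝ) : Set ℝ := {x | ∃ n : ℤ, x = q ^ n ∨ x = -(q ^ n)}

/-- The set `R_{q,+} = {q^n : n ∈ ℤ}`. -/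
def RqPos (q : ℝ) : Set ℝ := {x | ∃ n : ℤ, x = q ^ n}

/-- q-Jackson integral `∫_0^∞ f(t) d_q t`. -/
def qIntPos (q : ℝ) (f : ℝ → ℂ) : ℂ :=
  ((1 - q : ℝ) : ℂ) * ∑' n : ℤ, ((q ^ n : ℝ) : ℂ) * f (q ^ n)

/-- Bilateral q-Jackson integral `∫_{-∞}^∞ f(t) d_q t`. -/
def qIntR (q : ℝ) (f : ℝ → ℂ) : ℂ :=
  ((1 - q : ℝ) : ℂ) * ∑' n : ℤ, ((q ^ n : ℝ) : ℂ) * (f (q ^ n) + f (-(q ^ n)))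

/-- q-Jackson integral `∫_{-a}^a f(t) d_q t`. -/
def qIntSym (q a : ℝ) (f : ℝ → ℂ) : ℂ :=
  (((1 - q) * a : ℝ) : ℂ) * ∑' n : ℕ, ((q ^ n : ℝ) : ℂ) * (f (a * q ^ n) + f (-(a * q ^ n)))

/-- q-Jackson integral `∫_{-1}^1 f(t) d_q t`. -/
def qIntPM1 (q : ℝ) (f : ℝ → ℂ) : ℂ :=
  ((1 - q : ℝ) : ℂ) * ∑' n : ℕ, ((q ^ n : ℝ) : ℂ) * (f (q ^ n) + f (-(q ^ n)))

/-- Normalized q-Bessel function `j_α(x;q²)`. -/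
def jq (q α : ℝ) (x : ℂ) : ℂ :=
  ∑' n : ℕ, (-1 : ℂ) ^ n * ((qGammaR (q ^ 2) (α + 1) : ℝ) : ℂ) * (q : ℂ) ^ (n * (n + 1)) *
      x ^ (2 * n) /
    ((((1 + q) ^ (2 * n) * qGammaR (q ^ 2) (α + (n : ℝ) + 1) * qGammaR (q ^ 2) ((n : ℝ) + 1) : ℝ)) : ℂ)

/-- The operator `H_{α,q}`. -/
def qH (q α : ℝ) (f : ℝ → ℂ) (x : ℝ) : ℂ := feP f x + ((q ^ (2 * α + 1) : ℝ) : ℂ) * foP f x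

/-- The q-Dunkl operator `Λ_{α,q}`. -/
def qDunkl (q α : ℝ) (f : ℝ → ℂ) (x : ℝ) : ℂ :=
  Dq q (qH q α f) x + ((qNumR q (2 * α + 1) : ℝ) : ℂ) * (f x - f (-x)) / ((2 * x : ℝ) : ℂ)

/-- The q-Dunkl kernel `ψ_λ^{α,q}`. -/
def qPsi (q α : ℝ) (lam : ℂ) (x : ℝ) : ℂ :=
  jq q α (lam * x) + I * lam * x / ((qNumR q (2 * α + 2) : ℝ) : ℂ) * jq q (α + 1) (lam * x)

/-- The q-Bessel operator `Δ_{α,q}`. -/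
def qDelta (q α : ℝ) (f : ℝ → ℂ) (x : ℝ) : ℂ :=
  ((|x| ^ (-(2 * α + 1)) : ℝ) : ℂ) * Dq q (fun t => ((|t| ^ (2 * α + 1) : ℝ) : ℂ) * f t) x

/-- The weight `W_α(t;q²)`. -/
def qW (α q t : ℝ) : ℝ := qPochR (t ^ 2 * q ^ 2) (q ^ 2) / qPochR (t ^ 2 * q ^ (2 * α + 1)) (q ^ 2)

/-- The constant `C(α;q²)`. -/
def qC (α q : ℝ) : ℝ :=
  (1 + q) * qGammaR (q ^ 2) (α + 1) / (qGammaR (q ^ 2) (1 / 2) * qGammaR (q ^ 2) (α + 1 / 2))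

/-- The constant `c_{α,q}`. -/
def cB (α q : ℝ) : ℝ := (1 + q) ^ (-α) / qGammaR (q ^ 2) (α + 1)

/-- The q-Dunkl intertwining operator `V_{α,q}`. -/
def Vq (q α : ℝ) (f : ℝ → ℂ) (x : ℝ) : ℂ :=
  ((qC α q / 2 : ℝ) : ℂ) * qIntPM1 q (fun t => ((qW α q t * (1 + t) : ℝ) : ℂ) * f (x * t))

/-- Membership in `L¹_{α,q}(R_{q,+})`. -/
def MemL1Pos (q α : ℝ) (f : ℝ → ℂ) : Prop :=
  Summable fun n : ℤ => (q ^ n : ℝ) * ‖f (q ^ n)‖ * ((q : ℝ) ^ n) ^ (2 * α + 1)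

/-- The q-Bessel Fourier transform `F_{α,q}`. -/
def FB (q α : ℝ) (f : ℝ → ℂ) (lam : ℝ) : ℂ :=
  ((cB α q : ℝ) : ℂ) * qIntPos q (fun x => f x * jq q α ((lam * x : ℝ) : ℂ) * ((x ^ (2 * α + 1) : ℝ) : ℂ))

/-- The space `E_q(R_q)` of q-smooth functions. -/
def MemEq (q : ℝ) (f : ℝ → ℂ) : Prop :=
  (∀ n : ℕ, ∀ a : ℝ, 0 ≤ a → ∃ C : ℝ, ∀ x ∈ Rq q ∩ Set.Icc (-a) a, ‖DqIter q f n x‖ ≤ C) ∧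
    ∀ n : ℕ, ∃ L : ℂ, Tendsto (DqIter q f n) (nhdsWithin 0 (Rq q)) (nhds L)

lemma key (q : ℝ) (hq0 : 0 < q) (hq1 : q < 1) (f g : ℝ → ℂ) (z : ℝ) (hz : z ≠ 0) :
    ((z : ℝ) : ℂ) * ((Dq q f z * g z + Dq q f (-z) * g (-z)) +
      (f z * Dq q g z + f (-z) * Dq q g (-z))) =
    ((2 / (1 - q) : ℝ) : ℂ) *
      ((feP f (z / q) * foP g z + foP f z * feP g (z / q)) -
       (feP f z * foP g (q * z) + foP f (q * z) * feP g z)) := by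
  have hq : q ≠ 0 := hq0.ne'
  have h1q : (1 : ℝ) - q ≠ 0 := by nlinarith
  have hzC : (z : ℂ) ≠ 0 := by exact_mod_cast hz
  have hqC : (q : ℂ) ≠ 0 := by exact_mod_cast hq
  have h1qC : (1 : ℂ) - (q : ℂ) ≠ 0 := by
    intro h; apply h1q; exact_mod_cast h
  unfold Dq feP foP
  simp only [mul_neg, neg_neg]
  have e1 : z / q = q⁻¹ * z := by field_simp
  rw [e1]
  push_cast
  field_simp
  ring

lemma tele (T : ℤ → ℂ) (m : ℕ) :
    ∑ n ∈ Finset.Icc (-(m : ℤ)) (m : ℤ), (T n - T (n + 1)) =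
      T (-(m : ℤ)) - T ((m : ℤ) + 1) := by
  induction m with
  | zero => simp
  | succ k ih =>
    have hc : ((k + 1 : ℕ) : ℤ) = (k : ℤ) + 1 := by push_cast; ring
    have hset : Finset.Icc (-((k : ℤ) + 1)) ((k : ℤ) + 1) =
        insert (-((k : ℤ) + 1)) (insert ((k : ℤ) + 1) (Finset.Icc (-(k : ℤ)) (k : ℤ))) := by
      ext x; simp only [Finset.mem_Icc, Finset.mem_insert]; omega
    rw [hc, hset, Finset.sum_insert (by simp only [Finset.mem_insert, Finset.mem_Icc]; omega),
      Finset.sum_insert (by simp only [Finset.mem_Icc]; omega), ih]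
    have h2 : -((k : ℤ) + 1) + 1 = -(k : ℤ) := by ring
    rw [h2]; ring


/-- q-integration by parts on ℝ_q. -/
theorem qIntR_by_parts (q : ℝ) (hq0 : 0 < q) (hq1 : q < 1) (f g : ℝ → ℂ)
    (h1 : Summable fun n : ℤ =>
      (q ^ n : ℝ) * (‖Dq q f (q ^ n) * g (q ^ n)‖ + ‖Dq q f (-(q ^ n)) * g (-(q ^ n))‖))
    (h2 : Summable fun n : ℤ =>
      (q ^ n : ℝ) * (‖f (q ^ n) * Dq q g (q ^ n)‖ + ‖f (-(q ^ n)) * Dq q g (-(q ^ n))‖))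
    (hBinf : Tendsto
      (fun m : ℕ => feP f (q ^ (-(m : ℤ)) / q) * foP g (q ^ (-(m : ℤ))) +
        foP f (q ^ (-(m : ℤ))) * feP g (q ^ (-(m : ℤ)) / q)) atTop (nhds 0))
    (hB0 : Tendsto
      (fun m : ℕ => feP f (q ^ (m : ℤ) / q) * foP g (q ^ (m : ℤ)) +
        foP f (q ^ (m : ℤ)) * feP g (q ^ (m : ℤ) / q)) atTop (nhds 0)) :
    qIntR q (fun x => Dq q f x * g x) = -qIntR q (fun x => f x * Dq q g x) := by
  have hq : q ≠ 0 := hq0.ne'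
  set F : ℤ → ℂ := fun n => ((q ^ n : ℝ) : ℂ) *
    (Dq q f (q ^ n) * g (q ^ n) + Dq q f (-(q ^ n)) * g (-(q ^ n))) with hFdef
  set G : ℤ → ℂ := fun n => ((q ^ n : ℝ) : ℂ) *
    (f (q ^ n) * Dq q g (q ^ n) + f (-(q ^ n)) * Dq q g (-(q ^ n))) with hGdef
  set T : ℤ → ℂ := fun n => feP f (q ^ n / q) * foP g (q ^ n) +
    foP f (q ^ n) * feP g (q ^ n / q) with hTdef
  have hF : Summable F := by
    refine Summable.of_norm_bounded h1 fun n => ?_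
    have hpos : (0 : ℝ) < q ^ n := zpow_pos hq0 n
    calc ‖F n‖ = |(q : ℝ) ^ n| * ‖Dq q f (q ^ n) * g (q ^ n) + Dq q f (-(q ^ n)) * g (-(q ^ n))‖ := by
          rw [hFdef]; simp [norm_mul]
      _ ≤ (q ^ n : ℝ) * (‖Dq q f (q ^ n) * g (q ^ n)‖ + ‖Dq q f (-(q ^ n)) * g (-(q ^ n))‖) := by
          rw [abs_of_pos hpos]
          exact mul_le_mul_of_nonneg_left (norm_add_le _ _) hpos.le
  have hG : Summable G := by
    refine Summable.of_norm_bounded h2 fun n => ?_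
    have hpos : (0 : ℝ) < q ^ n := zpow_pos hq0 n
    calc ‖G n‖ = |(q : ℝ) ^ n| * ‖f (q ^ n) * Dq q g (q ^ n) + f (-(q ^ n)) * Dq q g (-(q ^ n))‖ := by
          rw [hGdef]; simp [norm_mul]
      _ ≤ (q ^ n : ℝ) * (‖f (q ^ n) * Dq q g (q ^ n)‖ + ‖f (-(q ^ n)) * Dq q g (-(q ^ n))‖) := by
          rw [abs_of_pos hpos]
          exact mul_le_mul_of_nonneg_left (norm_add_le _ _) hpos.le
  have hkey : ∀ n : ℤ, F n + G n = ((2 / (1 - q) : ℝ) : ℂ) * (T n - T (n + 1)) := by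
    intro n
    have hz : (q : ℝ) ^ n ≠ 0 := zpow_ne_zero n hq
    have hT1 : T (n + 1) = feP f ((q : ℝ) ^ n) * foP g (q * q ^ n) +
        foP f (q * q ^ n) * feP g ((q : ℝ) ^ n) := by
      simp only [hTdef]
      rw [zpow_add_one₀ hq n, mul_div_cancel_right₀ _ hq, mul_comm ((q : ℝ) ^ n) q]
    calc F n + G n
        = ((q ^ n : ℝ) : ℂ) * ((Dq q f (q ^ n) * g (q ^ n) + Dq q f (-(q ^ n)) * g (-(q ^ n))) +
            (f (q ^ n) * Dq q g (q ^ n) + f (-(q ^ n)) * Dq q g (-(q ^ n)))) := by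
          simp only [hFdef, hGdef]; ring
      _ = ((2 / (1 - q) : ℝ) : ℂ) * (T n - T (n + 1)) := by
          rw [key q hq0 hq1 f g (q ^ n) hz, hT1]
  have htendI : Tendsto (fun m : ℕ => Finset.Icc (-(m : ℤ)) (m : ℤ)) atTop atTop := by
    apply tendsto_atTop_finset_of_monotone
    · intro a b hab
      apply Finset.Icc_subset_Icc <;> omega
    · intro x
      exact ⟨x.natAbs, by simp only [Finset.mem_Icc]; omega⟩
  have hps : Tendsto (fun m : ℕ => ∑ n ∈ Finset.Icc (-(m : ℤ)) (m : ℤ), (F n + G n)) atTop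
      (nhds (∑' n : ℤ, (F n + G n))) := (hF.add hG).hasSum.comp htendI
  have hTm : Tendsto (fun m : ℕ => T (-(m : ℤ))) atTop (nhds 0) := hBinf
  have hTp : Tendsto (fun m : ℕ => T ((m : ℤ) + 1)) atTop (nhds 0) := by
    have h' := hB0.comp (tendsto_add_atTop_nat 1)
    have heq : (fun m : ℕ => T ((m : ℤ) + 1)) =
        ((fun m : ℕ => feP f (q ^ (m : ℤ) / q) * foP g (q ^ (m : ℤ)) +
          foP f (q ^ (m : ℤ)) * feP g (q ^ (m : ℤ) / q)) ∘ (fun m => m + 1)) := by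
      funext m
      have : ((m + 1 : ℕ) : ℤ) = (m : ℤ) + 1 := by push_cast; ring
      simp only [hTdef, Function.comp_apply, this]
    rw [heq]; exact h'
  have hps2 : Tendsto (fun m : ℕ => ∑ n ∈ Finset.Icc (-(m : ℤ)) (m : ℤ), (F n + G n)) atTop
      (nhds 0) := by
    have heq : (fun m : ℕ => ∑ n ∈ Finset.Icc (-(m : ℤ)) (m : ℤ), (F n + G n)) =
        fun m : ℕ => ((2 / (1 - q) : ℝ) : ℂ) * (T (-(m : ℤ)) - T ((m : ℤ) + 1)) := by
      funext m
      rw [Finset.sum_congr rfl (fun n _ => hkey n), ← Finset.mul_sum, tele T m]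
    rw [heq]
    have := ((hTm.sub hTp).const_mul (((2 / (1 - q) : ℝ) : ℂ)))
    simpa using this
  have h0 : (∑' n : ℤ, (F n + G n)) = 0 := tendsto_nhds_unique hps hps2
  rw [Summable.tsum_add hF hG] at h0
  have hFG : (∑' n : ℤ, F n) = -(∑' n : ℤ, G n) := by linear_combination h0
  unfold qIntR
  have e1 : (∑' n : ℤ, ((q ^ n : ℝ) : ℂ) * ((fun x => Dq q f x * g x) (q ^ n) +
      (fun x => Dq q f x * g x) (-(q ^ n)))) = ∑' n : ℤ, F n := rfl
  have e2 : (∑' n : ℤ, ((q ^ n : ℝ) : ℂ) * ((fun x => f x * Dq q g x) (q ^ n) +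
      (fun x => f x * Dq q g x) (-(q ^ n)))) = ∑' n : ℤ, G n := rfl
  rw [e1, e2, hFG]
  ring

end
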